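/- arXiv:2509.23790 — 3 statements merged into one kernel-verified Lean document; each statement's English description precedes it below -/
import Mathlib

section
/- Let d ≥ 3 be an integer. For all t > 0 and ρ > 0, (G_t * R^ρ)(0) = (1/2)·∫_0^∞ ν^{d/2−2} (t + ν + 2ρ)^{-d/2} dν = 1/((d−2)(t+2ρ)). -/
open MeasureTheory Real

/-- The standard `d`-dimensional heat kernel `G_t(x) = (2πt)^{-d/2} exp(-|x|²/(2t))`. -/
noncomputable def heatKernel (d : ℕ) (t : ℝ) (x : EuclideanSpace ℝ (Fin d)) : ℝ :=
  (2 * π * t) ^ (-(d : ℝ) / 2) * Real.exp (-‖x‖ ^ 2 / (2 * t))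

/-- The mollified Riesz kernel `R^ρ = G_{2ρ} * |·|^{-2}`. -/
noncomputable def rieszMol (d : ℕ) (ρ : ℝ) (x : EuclideanSpace ℝ (Fin d)) : ℝ :=
  ∫ y : EuclideanSpace ℝ (Fin d), heatKernel d (2 * ρ) (x - y) * ‖y‖ ^ (-2 : ℝ)

variable {d : ℕ}

lemma gaussE_int (b : ℝ) (hb : 0 < b) :
    ∫ v : EuclideanSpace ℝ (Fin d), rexp (-b * ‖v‖ ^ 2) = (π / b) ^ ((d : ℝ) / 2) := by
  rw [GaussianFourier.integral_rexp_neg_mul_sq_norm hb, finrank_euclideanSpace_fin]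

lemma gaussE_integrable (b : ℝ) (hb : 0 < b) :
    Integrable (fun v : EuclideanSpace ℝ (Fin d) => rexp (-b * ‖v‖ ^ 2)) := by
  have h := (GaussianFourier.integrable_cexp_neg_mul_sq_norm_add (V := EuclideanSpace ℝ (Fin d))
    (b := (b : ℂ)) (by simpa using hb) 0 0).norm
  refine h.congr (Filter.Eventually.of_forall fun v => ?_)
  simp [Complex.norm_exp]
  left; norm_cast

open RealInnerProductSpace in
lemma complete_square (a b : ℝ) (ha : 0 < a) (hb : 0 < b) (z : EuclideanSpace ℝ (Fin d)) :
    ∫ y : EuclideanSpace ℝ (Fin d), rexp (-a * ‖y‖ ^ 2 - b * ‖z - y‖ ^ 2)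
      = rexp (-(a * b / (a + b)) * ‖z‖ ^ 2) * (π / (a + b)) ^ ((d : ℝ) / 2) := by
  have hab : 0 < a + b := by positivity
  have key : ∀ y : EuclideanSpace ℝ (Fin d), -a * ‖y‖ ^ 2 - b * ‖z - y‖ ^ 2
      = -(a + b) * ‖y - (b / (a + b)) • z‖ ^ 2 + -(a * b / (a + b)) * ‖z‖ ^ 2 := by
    intro y
    have h1 : ‖z - y‖ ^ 2 = ‖z‖ ^ 2 - 2 * ⟪z, y⟫ + ‖y‖ ^ 2 := norm_sub_sq_real z y
    have h2 : ‖y - (b / (a + b)) • z‖ ^ 2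
        = ‖y‖ ^ 2 - 2 * ((b / (a + b)) * ⟪z, y⟫) + (b / (a + b)) ^ 2 * ‖z‖ ^ 2 := by
      rw [norm_sub_sq_real, real_inner_smul_right, norm_smul, real_inner_comm]
      simp [mul_pow, sq_abs, Real.norm_eq_abs, abs_div, abs_of_pos hb, abs_of_pos hab]
    rw [h1, h2]
    field_simp
    ring
  simp_rw [key, Real.exp_add, integral_mul_const]
  rw [mul_comm]
  congr 1
  have := integral_sub_right_eq_self (μ := volume)
    (fun y : EuclideanSpace ℝ (Fin d) => rexp (-(a + b) * ‖y‖ ^ 2)) ((b / (a + b)) • z)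
  rw [this, gaussE_int _ hab]

lemma heat_semigroup (t s : ℝ) (ht : 0 < t) (hs : 0 < s) (z : EuclideanSpace ℝ (Fin d)) :
    ∫ y : EuclideanSpace ℝ (Fin d), heatKernel d t y * heatKernel d s (z - y)
      = heatKernel d (t + s) z := by
  have h2t : (0:ℝ) < 2 * π * t := by positivity
  have h2s : (0:ℝ) < 2 * π * s := by positivity
  have h2ts : (0:ℝ) < 2 * π * (t + s) := by positivity
  have key : ∀ y : EuclideanSpace ℝ (Fin d), heatKernel d t y * heatKernel d s (z - y)
      = ((2 * π * t) ^ (-(d:ℝ)/2) * (2 * π * s) ^ (-(d:ℝ)/2)) *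
        rexp (-(1/(2*t)) * ‖y‖ ^ 2 - (1/(2*s)) * ‖z - y‖ ^ 2) := by
    intro y
    simp only [heatKernel]
    rw [mul_mul_mul_comm, ← Real.exp_add]
    congr 1
    ring
  simp_rw [key, integral_const_mul,
    complete_square (1/(2*t)) (1/(2*s)) (by positivity) (by positivity) z]
  have hexp : -(1/(2*t) * (1/(2*s)) / (1/(2*t) + 1/(2*s))) * ‖z‖ ^ 2
      = -‖z‖ ^ 2 / (2 * (t + s)) := by
    have hq : 1/(2*t) * (1/(2*s)) / (1/(2*t) + 1/(2*s)) = 1/(2*(t+s)) := by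
      field_simp
      ring
    rw [hq]
    ring
  have hconst : (2 * π * t) ^ (-(d:ℝ)/2) * (2 * π * s) ^ (-(d:ℝ)/2) *
      (π / (1/(2*t) + 1/(2*s))) ^ ((d:ℝ)/2) = (2 * π * (t + s)) ^ (-(d:ℝ)/2) := by
    rw [neg_div, Real.rpow_neg h2t.le, Real.rpow_neg h2s.le, Real.rpow_neg h2ts.le,
      ← Real.inv_rpow h2t.le, ← Real.inv_rpow h2s.le, ← Real.inv_rpow h2ts.le,
      ← Real.mul_rpow (by positivity) (by positivity),
      ← Real.mul_rpow (by positivity) (by positivity)]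
    congr 1
    field_simp
    ring
  rw [hexp, heatKernel, ← hconst]
  ring

lemma gauss_moment (σ s : ℝ) (hσ : 0 < σ) (hs : 0 < s) :
    ∫ z : EuclideanSpace ℝ (Fin d), heatKernel d σ z * rexp (-s * ‖z‖ ^ 2)
      = (1 + 2*σ*s) ^ (-(d:ℝ)/2) := by
  have h2σ : (0:ℝ) < 2 * π * σ := by positivity
  have hc : (0:ℝ) < 1/(2*σ) + s := by positivity
  have h1 : (0:ℝ) < 1 + 2*σ*s := by positivity
  have key : ∀ z : EuclideanSpace ℝ (Fin d), heatKernel d σ z * rexp (-s * ‖z‖ ^ 2)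
      = (2 * π * σ) ^ (-(d:ℝ)/2) * rexp (-(1/(2*σ) + s) * ‖z‖ ^ 2) := by
    intro z
    simp only [heatKernel]
    rw [mul_assoc, ← Real.exp_add]
    congr 2
    field_simp
    ring
  simp_rw [key, integral_const_mul, gaussE_int _ hc]
  rw [neg_div, Real.rpow_neg h2σ.le, Real.rpow_neg h1.le,
    ← Real.inv_rpow h2σ.le, ← Real.inv_rpow h1.le,
    ← Real.mul_rpow (by positivity) (by positivity)]
  congr 1
  field_simp

lemma oneD_a (hd : 3 ≤ d) (σ : ℝ) (hσ : 0 < σ) :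
    (∫ s in Set.Ioi (0:ℝ), (1 + 2*σ*s) ^ (-(d:ℝ)/2) = 1/(((d:ℝ)-2)*σ))
    ∧ IntegrableOn (fun s : ℝ => (1 + 2*σ*s) ^ (-(d:ℝ)/2)) (Set.Ioi 0) := by
  have hd3 : (3:ℝ) ≤ (d:ℝ) := by exact_mod_cast hd
  have hdm2 : (0:ℝ) < (d:ℝ) - 2 := by linarith
  set p : ℝ := 1 - (d:ℝ)/2 with hp
  set c : ℝ := ((d:ℝ)-2)*σ with hc
  have hcpos : 0 < c := by positivity
  set g : ℝ → ℝ := fun s => (1 - (1 + 2*σ*s) ^ p) / c with hg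
  have hderiv : ∀ s ∈ Set.Ici (0:ℝ), HasDerivAt g ((1 + 2*σ*s) ^ (-(d:ℝ)/2)) s := by
    intro s hs
    have hu : (0:ℝ) < 1 + 2*σ*s := by
      have : (0:ℝ) ≤ 2*σ*s := mul_nonneg (by positivity) hs
      linarith
    have h1 : HasDerivAt (fun s : ℝ => 1 + 2*σ*s) (2*σ) s := by
      simpa using ((hasDerivAt_id s).const_mul (2*σ)).const_add (1:ℝ)
    have h2 := (h1.rpow_const (p := p) (Or.inl hu.ne'))
    have h3 := (h2.const_sub (1:ℝ)).div_const c
    refine h3.congr_deriv ?_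
    have hpm : p - 1 = -(d:ℝ)/2 := by rw [hp]; ring
    rw [hpm]
    field_simp
    ring
  have hcont : ContinuousWithinAt g (Set.Ici (0:ℝ)) 0 :=
    (hderiv 0 Set.self_mem_Ici).continuousAt.continuousWithinAt
  have htop : Filter.Tendsto (fun s : ℝ => 1 + 2*σ*s) Filter.atTop Filter.atTop := by
    apply Filter.tendsto_atTop_add_const_left
    exact Filter.Tendsto.const_mul_atTop (by positivity) Filter.tendsto_id
  have hlim0 : Filter.Tendsto (fun s : ℝ => (1 + 2*σ*s) ^ p) Filter.atTop (nhds 0) := by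
    have := (tendsto_rpow_neg_atTop (y := (d:ℝ)/2 - 1) (by linarith)).comp htop
    convert this using 2 with s
    simp only [Function.comp_apply]
    congr 1
    rw [hp]; ring
  have hglim : Filter.Tendsto g Filter.atTop (nhds (1/c)) := by
    have : Filter.Tendsto (fun s : ℝ => (1 - (1 + 2*σ*s) ^ p) / c) Filter.atTop
        (nhds ((1 - 0)/c)) := (Filter.Tendsto.const_sub _ hlim0).div_const c
    simpa using this
  have hg0 : g 0 = 0 := by simp [hg]
  constructor
  · have := integral_Ioi_of_hasDerivAt_of_nonneg hcont
      (fun x hx => hderiv x (Set.Ioi_subset_Ici_self hx))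
      (fun x hx => Real.rpow_nonneg (by nlinarith [mul_nonneg hσ.le (Set.mem_Ioi.mp hx).le]) _) hglim
    rw [this, hg0, sub_zero]
  · exact integrableOn_Ioi_deriv_of_nonneg hcont (fun x hx => hderiv x (Set.Ioi_subset_Ici_self hx))
      (fun x hx => Real.rpow_nonneg (by nlinarith [mul_nonneg hσ.le (Set.mem_Ioi.mp hx).le]) _) hglim

lemma oneD_b (hd : 3 ≤ d) (σ : ℝ) (hσ : 0 < σ) :
    ∫ ν in Set.Ioi (0:ℝ), ν ^ ((d:ℝ)/2 - 2) * (σ + ν) ^ (-(d:ℝ)/2)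
      = 2/(((d:ℝ)-2)*σ) := by
  have hd3 : (3:ℝ) ≤ (d:ℝ) := by exact_mod_cast hd
  have hdm2 : (0:ℝ) < (d:ℝ) - 2 := by linarith
  set q : ℝ := (d:ℝ)/2 - 1 with hq
  have hqpos : 0 < q := by rw [hq]; linarith
  set c : ℝ := ((d:ℝ)-2)*σ with hc
  have hcpos : 0 < c := by positivity
  set g : ℝ → ℝ := fun ν => ν ^ q * (σ + ν) ^ (-q) * (2/c) with hg
  have hderiv : ∀ ν ∈ Set.Ioi (0:ℝ),
      HasDerivAt g (ν ^ ((d:ℝ)/2 - 2) * (σ + ν) ^ (-(d:ℝ)/2)) ν := by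
    intro ν hν
    have hν0 : (0:ℝ) < ν := hν
    have hσν : (0:ℝ) < σ + ν := by linarith
    have h1 : HasDerivAt (fun x : ℝ => x ^ q) (q * ν ^ (q-1)) ν :=
      Real.hasDerivAt_rpow_const (Or.inl hν0.ne')
    have h2 : HasDerivAt (fun x : ℝ => (σ + x) ^ (-q)) (1 * (-q) * (σ + ν) ^ (-q-1)) ν :=
      ((hasDerivAt_id ν).const_add σ).rpow_const (Or.inl hσν.ne')
    have h3 := (h1.mul h2).mul_const (2/c)
    refine h3.congr_deriv ?_
    have e1 : ν ^ q = ν ^ (q-1) * ν := by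
      have h := Real.rpow_add_one hν0.ne' (q-1)
      rw [sub_add_cancel] at h
      exact h
    have e2 : (σ + ν) ^ (-q) = (σ + ν) ^ (-q-1) * (σ + ν) := by
      have h := Real.rpow_add_one hσν.ne' (-q-1)
      rw [sub_add_cancel] at h
      exact h
    have e3 : ((d:ℝ)/2 - 2) = q - 1 := by rw [hq]; ring
    have e4 : (-(d:ℝ)/2) = -q - 1 := by rw [hq]; ring
    rw [e1, e2, e3, e4, hc, hq]
    field_simp
    ring
  have hcont : ContinuousWithinAt g (Set.Ici (0:ℝ)) 0 := by
    have f1 : ContinuousAt (fun x : ℝ => x ^ q) 0 :=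
      Real.continuousAt_rpow_const 0 q (Or.inr hqpos.le)
    have f2 : ContinuousAt (fun x : ℝ => (σ + x) ^ (-q)) 0 := by
      apply ContinuousAt.rpow_const
      · exact (continuous_const.add continuous_id).continuousAt
      · exact Or.inl (by simpa using hσ.ne')
    exact (((f1.mul f2).mul continuousAt_const)).continuousWithinAt
  have hg0 : g 0 = 0 := by
    simp [hg, Real.zero_rpow hqpos.ne']
  have hglim : Filter.Tendsto g Filter.atTop (nhds (2/c)) := by
    have h0 : Filter.Tendsto (fun ν : ℝ => σ/(σ+ν)) Filter.atTop (nhds 0) :=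
      Filter.Tendsto.div_atTop tendsto_const_nhds
        (Filter.tendsto_atTop_add_const_left _ σ Filter.tendsto_id)
    have h1 : Filter.Tendsto (fun ν : ℝ => 1 - σ/(σ+ν)) Filter.atTop (nhds 1) := by
      have := h0.const_sub (1:ℝ)
      simpa using this
    have h2 : Filter.Tendsto (fun ν : ℝ => ν/(σ+ν)) Filter.atTop (nhds 1) := by
      apply h1.congr'
      filter_upwards [Filter.eventually_gt_atTop (0:ℝ)] with ν hν
      have hσν : (0:ℝ) < σ + ν := by linarith
      field_simp
      ring
    have h3 : Filter.Tendsto (fun ν : ℝ => (ν/(σ+ν)) ^ q) Filter.atTop (nhds 1) := by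
      have hcq : ContinuousAt (fun x : ℝ => x ^ q) 1 :=
        Real.continuousAt_rpow_const 1 q (Or.inl one_ne_zero)
      have := hcq.tendsto.comp h2
      simpa [Real.one_rpow, Function.comp_def] using this
    have h4 := h3.mul_const (2/c)
    rw [one_mul] at h4
    apply h4.congr'
    filter_upwards [Filter.eventually_gt_atTop (0:ℝ)] with ν hν
    have hσν : (0:ℝ) < σ + ν := by linarith
    rw [Real.div_rpow hν.le hσν.le]
    show _ = ν ^ q * (σ + ν) ^ (-q) * (2 / c)
    rw [Real.rpow_neg hσν.le, div_eq_mul_inv]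
  have := integral_Ioi_of_hasDerivAt_of_nonneg hcont hderiv
    (fun x hx => mul_nonneg (Real.rpow_nonneg (Set.mem_Ioi.mp hx).le _)
      (Real.rpow_nonneg (by linarith [Set.mem_Ioi.mp hx]) _)) hglim
  rw [this, hg0, sub_zero]

lemma heatKernel_nonneg (t : ℝ) (ht : 0 < t) (x : EuclideanSpace ℝ (Fin d)) :
    0 ≤ heatKernel d t x := by
  unfold heatKernel
  positivity

lemma heatKernel_continuous (t : ℝ) (ht : 0 < t) :
    Continuous (fun x : EuclideanSpace ℝ (Fin d) => heatKernel d t x) := by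
  unfold heatKernel
  fun_prop

lemma heatKernel_le (t : ℝ) (ht : 0 < t) (x : EuclideanSpace ℝ (Fin d)) :
    heatKernel d t x ≤ (2 * π * t) ^ (-(d:ℝ)/2) := by
  unfold heatKernel
  have h1 : rexp (-‖x‖ ^ 2 / (2 * t)) ≤ 1 := by
    rw [Real.exp_le_one_iff]
    have h0 : (0:ℝ) ≤ ‖x‖ ^ 2 / (2 * t) := by positivity
    have h2 : -‖x‖ ^ 2 / (2*t) = -(‖x‖^2/(2*t)) := by ring
    rw [h2]
    linarith
  calc (2 * π * t) ^ (-(d:ℝ)/2) * rexp (-‖x‖ ^ 2 / (2 * t))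
      ≤ (2 * π * t) ^ (-(d:ℝ)/2) * 1 := by
        apply mul_le_mul_of_nonneg_left h1 (Real.rpow_nonneg (by positivity) _)
    _ = (2 * π * t) ^ (-(d:ℝ)/2) := mul_one _

lemma heatKernel_eq (t : ℝ) (ht : 0 < t) (x : EuclideanSpace ℝ (Fin d)) :
    heatKernel d t x = (2 * π * t) ^ (-(d:ℝ)/2) * rexp (-(1/(2*t)) * ‖x‖ ^ 2) := by
  unfold heatKernel
  congr 2
  ring

lemma heatKernel_integrable (t : ℝ) (ht : 0 < t) :
    Integrable (fun x : EuclideanSpace ℝ (Fin d) => heatKernel d t x) := by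
  have h := (gaussE_integrable (d := d) (1/(2*t)) (by positivity)).const_mul
    ((2 * π * t) ^ (-(d:ℝ)/2))
  exact h.congr (Filter.Eventually.of_forall fun x => (heatKernel_eq t ht x).symm)

lemma exp_int (c : ℝ) (hc : 0 < c) : ∫ s in Set.Ioi (0:ℝ), rexp (-s * c) = 1/c := by
  have h := integral_rpow_mul_exp_neg_mul_Ioi (a := 1) one_pos hc
  simp only [sub_self, Real.rpow_zero, one_mul, Real.rpow_one, Real.Gamma_one, mul_one] at h
  rw [← h]
  apply setIntegral_congr_fun measurableSet_Ioi
  intro s _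
  ring_nf

lemma exp_integrableOn (c : ℝ) (hc : 0 < c) :
    IntegrableOn (fun s : ℝ => rexp (-s * c)) (Set.Ioi 0) := by
  have := exp_neg_integrableOn_Ioi 0 hc
  exact this.congr_fun (fun s _ => by ring_nf) measurableSet_Ioi

lemma norm_rpow_neg_two (z : EuclideanSpace ℝ (Fin d)) : ‖z‖ ^ (-2:ℝ) = (‖z‖ ^ 2)⁻¹ := by
  rw [show (-2:ℝ) = -((2:ℕ):ℝ) by norm_num, Real.rpow_neg (norm_nonneg z),
    Real.rpow_natCast]

lemma gauss_moment_integrable (σ s : ℝ) (hσ : 0 < σ) (hs : 0 < s) :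
    Integrable (fun z : EuclideanSpace ℝ (Fin d) => heatKernel d σ z * rexp (-s * ‖z‖ ^ 2)) := by
  have h := (gaussE_integrable (d := d) (1/(2*σ) + s) (by positivity)).const_mul
    ((2*π*σ) ^ (-(d:ℝ)/2))
  refine h.congr (Filter.Eventually.of_forall fun z => ?_)
  show (2*π*σ) ^ (-(d:ℝ)/2) * rexp (-(1/(2*σ) + s) * ‖z‖ ^ 2)
      = heatKernel d σ z * rexp (-s * ‖z‖ ^ 2)
  have e : -(1/(2*σ) + s) * ‖z‖ ^ 2 = -(1/(2*σ)) * ‖z‖ ^ 2 + -s * ‖z‖ ^ 2 := by ring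
  rw [e, Real.exp_add, ← mul_assoc, ← heatKernel_eq σ hσ z]

lemma ae_ne_zero (hd : 3 ≤ d) : ∀ᵐ z : EuclideanSpace ℝ (Fin d) ∂volume, z ≠ 0 := by
  haveI : Nontrivial (EuclideanSpace ℝ (Fin d)) := by
    refine ⟨EuclideanSpace.single (⟨0, by omega⟩ : Fin d) (1:ℝ), 0, fun h => ?_⟩
    have := congrArg (fun v : EuclideanSpace ℝ (Fin d) => v ⟨0, by omega⟩) h
    simpa [EuclideanSpace.single_apply] using this
  haveI : NullSingletonClass (volume : Measure (EuclideanSpace ℝ (Fin d))) := by infer_instance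
  have h0 : (volume : Measure (EuclideanSpace ℝ (Fin d))) {0} = 0 := measure_singleton _
  rw [MeasureTheory.ae_iff]
  have hset : {a : EuclideanSpace ℝ (Fin d) | ¬ a ≠ 0} = {0} := by ext z; simp
  rw [hset]
  exact h0

lemma lint_riesz (hd : 3 ≤ d) (σ : ℝ) (hσ : 0 < σ) :
    ∫⁻ z : EuclideanSpace ℝ (Fin d), ENNReal.ofReal (heatKernel d σ z * ‖z‖ ^ (-2:ℝ))
      = ENNReal.ofReal (1/(((d:ℝ)-2)*σ)) := by
  have hstep1 : ∀ᵐ z : EuclideanSpace ℝ (Fin d) ∂volume,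
      ENNReal.ofReal (heatKernel d σ z * ‖z‖ ^ (-2:ℝ))
      = ∫⁻ s in Set.Ioi (0:ℝ), ENNReal.ofReal (heatKernel d σ z * rexp (-s * ‖z‖ ^ 2)) := by
    filter_upwards [ae_ne_zero hd] with z hz
    have hz0 : 0 < ‖z‖ := norm_pos_iff.mpr hz
    have hz2 : 0 < ‖z‖ ^ 2 := by positivity
    have hsub : ‖z‖ ^ (-2:ℝ) = ∫ s in Set.Ioi (0:ℝ), rexp (-s * ‖z‖ ^ 2) := by
      rw [exp_int _ hz2, norm_rpow_neg_two, one_div]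
    simp_rw [ENNReal.ofReal_mul (heatKernel_nonneg σ hσ z),
      lintegral_const_mul' _ _ ENNReal.ofReal_ne_top]
    congr 1
    rw [hsub, ofReal_integral_eq_lintegral_ofReal (exp_integrableOn _ hz2)
      (Filter.Eventually.of_forall fun s => (Real.exp_pos _).le)]
  rw [lintegral_congr_ae hstep1]
  have hc : Continuous (fun p : EuclideanSpace ℝ (Fin d) × ℝ =>
      heatKernel d σ p.1 * rexp (-p.2 * ‖p.1‖ ^ 2)) := by
    exact ((heatKernel_continuous σ hσ).comp continuous_fst).mul
      (Real.continuous_exp.comp ((continuous_snd.neg).mul ((continuous_fst.norm).pow 2)))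
  have hmeas : AEMeasurable (fun p : EuclideanSpace ℝ (Fin d) × ℝ =>
      ENNReal.ofReal (heatKernel d σ p.1 * rexp (-p.2 * ‖p.1‖ ^ 2)))
      (volume.prod (volume.restrict (Set.Ioi 0))) :=
    (ENNReal.continuous_ofReal.comp hc).measurable.aemeasurable
  rw [lintegral_lintegral_swap hmeas]
  have hinner : ∀ s ∈ Set.Ioi (0:ℝ),
      (∫⁻ z : EuclideanSpace ℝ (Fin d),
        ENNReal.ofReal (heatKernel d σ z * rexp (-s * ‖z‖ ^ 2)))
      = ENNReal.ofReal ((1 + 2*σ*s) ^ (-(d:ℝ)/2)) := by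
    intro s hs
    rw [← ofReal_integral_eq_lintegral_ofReal (gauss_moment_integrable σ s hσ hs)
      (Filter.Eventually.of_forall fun z =>
        mul_nonneg (heatKernel_nonneg σ hσ z) (Real.exp_pos _).le),
      gauss_moment σ s hσ hs]
  rw [setLIntegral_congr_fun measurableSet_Ioi hinner]
  rw [← ofReal_integral_eq_lintegral_ofReal (oneD_a hd σ hσ).2
    ((ae_restrict_iff' measurableSet_Ioi).mpr (Filter.Eventually.of_forall fun s hs =>
      Real.rpow_nonneg (by nlinarith [(Set.mem_Ioi.mp hs).le, mul_nonneg hσ.le (Set.mem_Ioi.mp hs).le]) _))]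
  rw [(oneD_a hd σ hσ).1]

lemma heatKernel_sub_comm (s : ℝ) (y z : EuclideanSpace ℝ (Fin d)) :
    heatKernel d s (y - z) = heatKernel d s (z - y) := by
  unfold heatKernel
  rw [norm_sub_rev]

lemma heat_semigroup' (t s : ℝ) (ht : 0 < t) (hs : 0 < s) (z : EuclideanSpace ℝ (Fin d)) :
    ∫ y : EuclideanSpace ℝ (Fin d), heatKernel d t y * heatKernel d s (y - z)
      = heatKernel d (t + s) z := by
  rw [← heat_semigroup t s ht hs z]
  exact integral_congr_ae (Filter.Eventually.of_forall fun y => by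
    simp only []
    rw [heatKernel_sub_comm])

lemma hmhi (t s : ℝ) (ht : 0 < t) (hs : 0 < s) (z : EuclideanSpace ℝ (Fin d)) :
    Integrable (fun y : EuclideanSpace ℝ (Fin d) =>
      heatKernel d t y * heatKernel d s (y - z)) := by
  have hbdd : ∃ C, ∀ y : EuclideanSpace ℝ (Fin d), ‖heatKernel d s (y - z)‖ ≤ C :=
    ⟨(2*π*s) ^ (-(d:ℝ)/2), fun y => by
      rw [Real.norm_eq_abs, abs_of_nonneg (heatKernel_nonneg s hs _)]
      exact heatKernel_le s hs _⟩
  have h := Integrable.bdd_mul (heatKernel_integrable t ht)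
    (((heatKernel_continuous s hs).comp (continuous_id.sub continuous_const)).aestronglyMeasurable)
    (Filter.Eventually.of_forall hbdd.choose_spec)
  exact h.congr (Filter.Eventually.of_forall fun y => by
    simp only [Function.comp_apply, id_eq, Pi.sub_apply]
    ring)

lemma int_riesz (hd : 3 ≤ d) (σ : ℝ) (hσ : 0 < σ) :
    ∫ z : EuclideanSpace ℝ (Fin d), heatKernel d σ z * ‖z‖ ^ (-2:ℝ)
      = 1/(((d:ℝ)-2)*σ) := by
  have hd3 : (3:ℝ) ≤ (d:ℝ) := by exact_mod_cast hd
  have hmeas : AEStronglyMeasurable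
      (fun z : EuclideanSpace ℝ (Fin d) => heatKernel d σ z * ‖z‖ ^ (-2:ℝ)) volume := by
    apply AEStronglyMeasurable.mul (heatKernel_continuous σ hσ).aestronglyMeasurable
    apply Measurable.aestronglyMeasurable
    fun_prop
  rw [integral_eq_lintegral_of_nonneg_ae (Filter.Eventually.of_forall fun z =>
    mul_nonneg (heatKernel_nonneg σ hσ z) (Real.rpow_nonneg (norm_nonneg z) _)) hmeas]
  rw [lint_riesz hd σ hσ, ENNReal.toReal_ofReal
    (le_of_lt (div_pos one_pos (mul_pos (by linarith) hσ)))]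

lemma prod_integrable (hd : 3 ≤ d) (t ρ : ℝ) (ht : 0 < t) (hρ : 0 < ρ) :
    Integrable (Function.uncurry (fun y z : EuclideanSpace ℝ (Fin d) =>
      heatKernel d t y * (heatKernel d (2*ρ) (y - z) * ‖z‖ ^ (-2:ℝ))))
      (volume.prod volume) := by
  have hd3 : (3:ℝ) ≤ (d:ℝ) := by exact_mod_cast hd
  have h2ρ : 0 < 2*ρ := by positivity
  have hσ : 0 < t + 2*ρ := by positivity
  have hmeas : Measurable (Function.uncurry (fun y z : EuclideanSpace ℝ (Fin d) =>
      heatKernel d t y * (heatKernel d (2*ρ) (y - z) * ‖z‖ ^ (-2:ℝ)))) := by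
    apply Measurable.mul
    · exact ((heatKernel_continuous t ht).comp continuous_fst).measurable
    · apply Measurable.mul
      · exact ((heatKernel_continuous _ h2ρ).comp (continuous_fst.sub continuous_snd)).measurable
      · fun_prop
  have hnn : ∀ p : EuclideanSpace ℝ (Fin d) × EuclideanSpace ℝ (Fin d),
      0 ≤ heatKernel d t p.1 * (heatKernel d (2*ρ) (p.1 - p.2) * ‖p.2‖ ^ (-2:ℝ)) :=
    fun p => mul_nonneg (heatKernel_nonneg t ht _)
      (mul_nonneg (heatKernel_nonneg _ h2ρ _) (Real.rpow_nonneg (norm_nonneg _) _))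
  refine ⟨hmeas.aestronglyMeasurable, ?_⟩
  rw [show (Function.uncurry fun y z : EuclideanSpace ℝ (Fin d) =>
      heatKernel d t y * (heatKernel d (2*ρ) (y - z) * ‖z‖ ^ (-2:ℝ)))
      = fun p : EuclideanSpace ℝ (Fin d) × EuclideanSpace ℝ (Fin d) =>
        heatKernel d t p.1 * (heatKernel d (2*ρ) (p.1 - p.2) * ‖p.2‖ ^ (-2:ℝ)) from rfl]
  rw [hasFiniteIntegral_iff_ofReal (Filter.Eventually.of_forall hnn)]
  have hmeas' : AEMeasurable (fun p : EuclideanSpace ℝ (Fin d) × EuclideanSpace ℝ (Fin d) =>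
      ENNReal.ofReal (heatKernel d t p.1 * (heatKernel d (2*ρ) (p.1 - p.2) * ‖p.2‖ ^ (-2:ℝ))))
      (volume.prod volume) := (ENNReal.measurable_ofReal.comp hmeas).aemeasurable
  rw [lintegral_prod_symm _ hmeas']
  have hinner : ∀ z : EuclideanSpace ℝ (Fin d),
      (∫⁻ y : EuclideanSpace ℝ (Fin d), ENNReal.ofReal
        (heatKernel d t y * (heatKernel d (2*ρ) (y - z) * ‖z‖ ^ (-2:ℝ))))
      = ENNReal.ofReal (heatKernel d (t + 2*ρ) z * ‖z‖ ^ (-2:ℝ)) := by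
    intro z
    have e : ∀ y : EuclideanSpace ℝ (Fin d),
        heatKernel d t y * (heatKernel d (2*ρ) (y - z) * ‖z‖ ^ (-2:ℝ))
        = heatKernel d t y * heatKernel d (2*ρ) (y - z) * ‖z‖ ^ (-2:ℝ) := fun y => by ring
    simp_rw [e, ENNReal.ofReal_mul (mul_nonneg (heatKernel_nonneg t ht _)
      (heatKernel_nonneg _ h2ρ _)), lintegral_mul_const' _ _ ENNReal.ofReal_ne_top]
    rw [← ofReal_integral_eq_lintegral_ofReal (hmhi t (2*ρ) ht h2ρ z)
      (Filter.Eventually.of_forall fun y => mul_nonneg (heatKernel_nonneg t ht _)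
        (heatKernel_nonneg _ h2ρ _)),
      heat_semigroup' t (2*ρ) ht h2ρ z,
      ← ENNReal.ofReal_mul (heatKernel_nonneg _ hσ _)]
  simp_rw [hinner]
  rw [lint_riesz hd (t + 2*ρ) hσ]
  exact ENNReal.ofReal_lt_top

/-- For `d ≥ 3`, `t > 0`, `ρ > 0`:
`(G_t * R^ρ)(0) = (1/2)∫_0^∞ ν^{d/2-2}(t+ν+2ρ)^{-d/2} dν = 1/((d-2)(t+2ρ))`. -/
theorem heat_conv_rieszMol_at_zero (d : ℕ) (hd : 3 ≤ d) (t ρ : ℝ) (ht : 0 < t) (hρ : 0 < ρ) :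
    (∫ y : EuclideanSpace ℝ (Fin d), heatKernel d t (0 - y) * rieszMol d ρ y) =
        (1 / 2) * ∫ ν in Set.Ioi (0 : ℝ),
          ν ^ ((d : ℝ) / 2 - 2) * (t + ν + 2 * ρ) ^ (-(d : ℝ) / 2) ∧
    (∫ y : EuclideanSpace ℝ (Fin d), heatKernel d t (0 - y) * rieszMol d ρ y) =
        1 / (((d : ℝ) - 2) * (t + 2 * ρ)) := by
  have hd3 : (3:ℝ) ≤ (d:ℝ) := by exact_mod_cast hd
  have h2ρ : (0:ℝ) < 2*ρ := by positivity
  have hσ : (0:ℝ) < t + 2*ρ := by positivity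
  have hA : (∫ y : EuclideanSpace ℝ (Fin d), heatKernel d t (0 - y) * rieszMol d ρ y)
      = 1/(((d:ℝ)-2)*(t+2*ρ)) := by
    have e1 : ∀ y : EuclideanSpace ℝ (Fin d), heatKernel d t (0 - y) * rieszMol d ρ y
        = ∫ z : EuclideanSpace ℝ (Fin d),
            heatKernel d t y * (heatKernel d (2*ρ) (y - z) * ‖z‖ ^ (-2:ℝ)) := by
      intro y
      have e0 : heatKernel d t (0 - y) = heatKernel d t y := by
        unfold heatKernel
        rw [zero_sub, norm_neg]
      rw [e0, rieszMol]
      exact (MeasureTheory.integral_const_mul _ _).symm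
    calc (∫ y : EuclideanSpace ℝ (Fin d), heatKernel d t (0 - y) * rieszMol d ρ y)
        = ∫ y : EuclideanSpace ℝ (Fin d), ∫ z : EuclideanSpace ℝ (Fin d),
            heatKernel d t y * (heatKernel d (2*ρ) (y - z) * ‖z‖ ^ (-2:ℝ)) :=
          integral_congr_ae (Filter.Eventually.of_forall e1)
      _ = ∫ z : EuclideanSpace ℝ (Fin d), ∫ y : EuclideanSpace ℝ (Fin d),
            heatKernel d t y * (heatKernel d (2*ρ) (y - z) * ‖z‖ ^ (-2:ℝ)) :=
          integral_integral_swap (prod_integrable hd t ρ ht hρ)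
      _ = ∫ z : EuclideanSpace ℝ (Fin d), heatKernel d (t + 2*ρ) z * ‖z‖ ^ (-2:ℝ) := by
          apply integral_congr_ae (Filter.Eventually.of_forall fun z => ?_)
          have e2 : ∀ y : EuclideanSpace ℝ (Fin d),
              heatKernel d t y * (heatKernel d (2*ρ) (y - z) * ‖z‖ ^ (-2:ℝ))
              = heatKernel d t y * heatKernel d (2*ρ) (y - z) * ‖z‖ ^ (-2:ℝ) := fun y => by ring
          simp_rw [e2, integral_mul_const, heat_semigroup' t (2*ρ) ht h2ρ z]
      _ = 1/(((d:ℝ)-2)*(t+2*ρ)) := int_riesz hd _ hσ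
  refine ⟨?_, hA⟩
  rw [hA]
  have hb := oneD_b hd (t+2*ρ) hσ
  have e3 : ∫ ν in Set.Ioi (0:ℝ), ν ^ ((d:ℝ)/2 - 2) * (t + ν + 2*ρ) ^ (-(d:ℝ)/2)
      = ∫ ν in Set.Ioi (0:ℝ), ν ^ ((d:ℝ)/2 - 2) * ((t + 2*ρ) + ν) ^ (-(d:ℝ)/2) := by
    apply setIntegral_congr_fun measurableSet_Ioi
    intro ν _
    simp only []
    rw [show t + ν + 2*ρ = (t + 2*ρ) + ν from by ring]
  rw [e3]
  rw [show (∫ ν in Set.Ioi (0:ℝ), ν ^ ((d:ℝ)/2 - 2) * ((t + 2*ρ) + ν) ^ (-(d:ℝ)/2))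
      = 2/(((d:ℝ)-2)*(t+2*ρ)) from hb]
  ring
end

section
/- For all t > 0 and ρ > 0, ∫_0^t ds / ( 2(s/t)(t−s) + 2ρ ) = ( t/√(t(t+4ρ)) ) · log( (t + √(t(t+4ρ)) + 2ρ) / (2ρ) ), and this quantity is at most log( (3t + 2ρ) / (2ρ) ). -/
open MeasureTheory Real

/-- For `t > 0` and `ρ > 0`:
`∫_0^t ds/(2(s/t)(t-s) + 2ρ) = (t/√(t(t+4ρ))) log((t + √(t(t+4ρ)) + 2ρ)/(2ρ))`,
and this quantity is at most `log((3t+2ρ)/(2ρ))`. -/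
theorem integral_inverse_parabola (t ρ : ℝ) (ht : 0 < t) (hρ : 0 < ρ) :
    (∫ s in Set.Ioc (0 : ℝ) t, (2 * (s / t) * (t - s) + 2 * ρ)⁻¹) =
        (t / Real.sqrt (t * (t + 4 * ρ))) *
          Real.log ((t + Real.sqrt (t * (t + 4 * ρ)) + 2 * ρ) / (2 * ρ)) ∧
      (t / Real.sqrt (t * (t + 4 * ρ))) *
          Real.log ((t + Real.sqrt (t * (t + 4 * ρ)) + 2 * ρ) / (2 * ρ)) ≤
        Real.log ((3 * t + 2 * ρ) / (2 * ρ)) := by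
  set D := Real.sqrt (t * (t + 4 * ρ)) with hDdef
  have hD2 : D ^ 2 = t * (t + 4 * ρ) := Real.sq_sqrt (by positivity)
  have hDpos : 0 < D := Real.sqrt_pos.mpr (by positivity)
  have htD : t < D := by
    nlinarith [hD2, hDpos]
  set a := (t - D) / 2 with ha_def
  set b := (t + D) / 2 with hb_def
  have ha : a < 0 := by rw [ha_def]; linarith
  have hb : t < b := by rw [hb_def]; linarith
  have hbpos : 0 < b := lt_trans ht hb
  constructor
  · -- integral computation
    rw [← intervalIntegral.integral_of_le ht.le]
    have hderiv : ∀ x ∈ Set.uIcc (0:ℝ) t,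
        HasDerivAt (fun x => (t / (2 * D)) * (Real.log (x - a) - Real.log (b - x)))
          ((2 * (x / t) * (t - x) + 2 * ρ)⁻¹) x := by
      intro x hx
      rw [Set.uIcc_of_le ht.le] at hx
      obtain ⟨hx0, hxt⟩ := hx
      have hxa : 0 < x - a := by linarith
      have hbx : 0 < b - x := by linarith
      have h1 : HasDerivAt (fun x => Real.log (x - a)) (1 / (x - a)) x := by
        simpa using ((hasDerivAt_id x).sub_const a).log (ne_of_gt hxa)
      have h2 : HasDerivAt (fun x => Real.log (b - x)) ((0 - 1) / (b - x)) x := by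
        simpa using ((hasDerivAt_const x b).sub (hasDerivAt_id x)).log (ne_of_gt hbx)
      have h := (h1.sub h2).const_mul (t / (2 * D))
      refine h.congr_deriv ?_
      have hden : 0 < 2 * (x / t) * (t - x) + 2 * ρ := by
        have h0 : 0 ≤ x / t := div_nonneg hx0 ht.le
        nlinarith
      have key : 2 * (x / t) * (t - x) + 2 * ρ = 2 / t * ((x - a) * (b - x)) := by
        rw [ha_def, hb_def]
        field_simp
        linear_combination (-1) * hD2
      rw [eq_comm, key, div_sub_div _ _ (ne_of_gt hxa) (ne_of_gt hbx),
        show 1 * (b - x) - (x - a) * (0 - 1) = D from by rw [ha_def, hb_def]; ring]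
      field_simp
    have hint : IntervalIntegrable (fun s => (2 * (s / t) * (t - s) + 2 * ρ)⁻¹)
        volume 0 t := by
      apply ContinuousOn.intervalIntegrable
      apply ContinuousOn.inv₀
      · fun_prop
      · intro x hx
        rw [Set.uIcc_of_le ht.le] at hx
        have h0 : 0 ≤ x / t := div_nonneg hx.1 ht.le
        have : 0 < 2 * (x / t) * (t - x) + 2 * ρ := by nlinarith [hx.2]
        exact ne_of_gt this
    rw [intervalIntegral.integral_eq_sub_of_hasDerivAt hderiv hint]
    have hta : t - a = b := by rw [ha_def, hb_def]; ring
    have hbt : b - t = -a := by rw [ha_def, hb_def]; ring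
    have h0a : (0:ℝ) - a = -a := by ring
    have hb0 : b - (0:ℝ) = b := by ring
    rw [hta, hbt, h0a, hb0]
    have hnega : 0 < -a := by linarith
    have hlog : Real.log b - Real.log (-a) = Real.log ((t + D + 2 * ρ) / (2 * ρ)) := by
      rw [← Real.log_div (ne_of_gt hbpos) (ne_of_gt hnega)]
      congr 1
      rw [div_eq_div_iff (ne_of_gt hnega) (by positivity)]
      rw [ha_def, hb_def]
      nlinarith [hD2]
    linear_combination (t / D) * hlog
  · -- inequality
    have hα0 : 0 < t / D := by positivity
    have hα1 : t / D < 1 := (div_lt_one hDpos).mpr htD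
    have hX : (0:ℝ) < (t + D) / (2 * ρ) := by positivity
    have hX1 : (1:ℝ) < 1 + (t + D) / (2 * ρ) := by linarith
    have hconc := (strictConcaveOn_log_Ioi.concaveOn).2
      (Set.mem_Ioi.mpr (by linarith : (0:ℝ) < 1 + (t + D) / (2 * ρ)))
      (Set.mem_Ioi.mpr one_pos) hα0.le (by linarith : 0 ≤ 1 - t / D)
      (by ring)
    simp only [smul_eq_mul, Real.log_one, mul_zero, add_zero, mul_one] at hconc
    have heq : (t + D + 2 * ρ) / (2 * ρ) = 1 + (t + D) / (2 * ρ) := by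
      field_simp
      ring
    have harg : t / D * (1 + (t + D) / (2 * ρ)) + (1 - t / D)
        ≤ (3 * t + 2 * ρ) / (2 * ρ) := by
      have h1 : t / D * (1 + (t + D) / (2 * ρ)) + (1 - t / D)
          = 1 + t * (t + D) / (D * (2 * ρ)) := by
        field_simp
        ring
      have h2 : t * (t + D) / (D * (2 * ρ)) ≤ 3 * t / (2 * ρ) := by
        rw [div_le_div_iff₀ (by positivity) (by positivity)]
        nlinarith [mul_nonneg (mul_pos ht hρ).le (by linarith : (0:ℝ) ≤ 2 * D - t)]
      have h3 : (3 * t + 2 * ρ) / (2 * ρ) = 1 + 3 * t / (2 * ρ) := by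
        field_simp
        ring
      rw [h1, h3]
      linarith
    have hargpos : 0 < t / D * (1 + (t + D) / (2 * ρ)) + (1 - t / D) := by
      nlinarith
    calc t / D * Real.log ((t + D + 2 * ρ) / (2 * ρ))
        = t / D * Real.log (1 + (t + D) / (2 * ρ)) := by rw [heq]
      _ ≤ Real.log (t / D * (1 + (t + D) / (2 * ρ)) + (1 - t / D)) := hconc
      _ ≤ Real.log ((3 * t + 2 * ρ) / (2 * ρ)) := Real.log_le_log hargpos harg
end

section
/- Let d ≥ 3 be an integer and α ∈ ℝ. Define ṽ_t(x) = t^α |x|^{−α} G_{2t}(x) for t > 0 and x ∈ ℝ^d \ {0}. Then ṽ satisfies the pointwise partial differential equation ∂_t ṽ_t(x) = Δ ṽ_t(x) + ( α(d − 2 − α) / |x|² ) ṽ_t(x) on (0,∞) × (ℝ^d \ {0}), where Δ denotes the spatial Laplacian. -/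
open Real

/-- The Laplacian of `f : ℝ^d → ℝ` at `x`, as the trace of the second derivative in the
standard orthonormal coordinate directions. -/
noncomputable def laplacian (d : ℕ) (f : EuclideanSpace ℝ (Fin d) → ℝ)
    (x : EuclideanSpace ℝ (Fin d)) : ℝ :=
  ∑ i : Fin d, iteratedFDeriv ℝ 2 f x ![EuclideanSpace.single i 1, EuclideanSpace.single i 1]

/-- radial profile -/
noncomputable def gfun (d : ℕ) (α t s : ℝ) : ℝ :=
  t ^ α * s ^ (-α / 2) * (2 * π * (2 * t)) ^ (-(d : ℝ) / 2) * Real.exp (-s / (4 * t))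

noncomputable def g1 (d : ℕ) (α t s : ℝ) : ℝ :=
  gfun d α t s * (-α / (2 * s) - 1 / (4 * t))

noncomputable def g2 (d : ℕ) (α t s : ℝ) : ℝ :=
  gfun d α t s * ((-α / (2 * s) - 1 / (4 * t)) ^ 2 + α / (2 * s ^ 2))

lemma gfun_hasDerivAt (d : ℕ) (α t : ℝ) (ht : 0 < t) {s : ℝ} (hs : 0 < s) :
    HasDerivAt (gfun d α t) (g1 d α t s) s := by
  have h1 : HasDerivAt (fun s : ℝ => s ^ (-α / 2)) ((-α / 2) * s ^ (-α / 2 - 1)) s :=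
    Real.hasDerivAt_rpow_const (Or.inl hs.ne')
  have h2' : HasDerivAt (fun s : ℝ => -s / (4 * t)) (-(1 / (4 * t))) s := by
    have : (fun s : ℝ => -s / (4 * t)) = fun s : ℝ => (-(1 / (4 * t))) * s := by
      funext s; field_simp
    rw [this]
    simpa using (hasDerivAt_id s).const_mul (-(1 / (4 * t)))
  have h2 : HasDerivAt (fun s : ℝ => Real.exp (-s / (4 * t)))
      (Real.exp (-s / (4 * t)) * (-(1 / (4 * t)))) s := h2'.exp
  have h3 := ((h1.const_mul (t ^ α)).mul_const ((2 * π * (2 * t)) ^ (-(d : ℝ) / 2))).mul h2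
  have key : s ^ (-α / 2 - 1) = s ^ (-α / 2) / s := by
    rw [Real.rpow_sub hs, Real.rpow_one]
  have hne : s ≠ 0 := hs.ne'
  have htne : t ≠ 0 := ht.ne'
  refine h3.congr_deriv ?_
  simp only [g1, gfun, key]
  field_simp
  ring

lemma g1_hasDerivAt (d : ℕ) (α t : ℝ) (ht : 0 < t) {s : ℝ} (hs : 0 < s) :
    HasDerivAt (g1 d α t) (g2 d α t s) s := by
  have hh : HasDerivAt (fun s : ℝ => -α / (2 * s) - 1 / (4 * t)) (α / (2 * s ^ 2)) s := by
    have h0 : HasDerivAt (fun s : ℝ => s⁻¹) (-(s ^ 2)⁻¹) s := hasDerivAt_inv hs.ne'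
    have h1 := (h0.const_mul (-α / 2)).sub_const (1 / (4 * t))
    have e1 : (fun s : ℝ => -α / (2 * s) - 1 / (4 * t)) = fun x => -α / 2 * x⁻¹ - 1 / (4 * t) := by
      funext s; ring
    have e2 : α / (2 * s ^ 2) = -α / 2 * -(s ^ 2)⁻¹ := by ring
    rw [e1, e2]; exact h1
  have := (gfun_hasDerivAt d α t ht hs).mul hh
  have hfun : (fun s => g1 d α t s) = fun s => gfun d α t s * (-α / (2 * s) - 1 / (4 * t)) := rfl
  rw [show g1 d α t = fun s => gfun d α t s * (-α / (2 * s) - 1 / (4 * t)) from rfl]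
  refine this.congr_deriv ?_
  simp only [g1, g2]
  ring

lemma laplacian_radial (d : ℕ) (α t : ℝ) (ht : 0 < t) (x : EuclideanSpace ℝ (Fin d))
    (hx : x ≠ 0) :
    laplacian d (fun y => gfun d α t (‖y‖ ^ 2)) x
      = 2 * d * g1 d α t (‖x‖ ^ 2) + 4 * ‖x‖ ^ 2 * g2 d α t (‖x‖ ^ 2) := by
  have hxn : (0:ℝ) < ‖x‖ := norm_pos_iff.mpr hx
  have hs : (0:ℝ) < ‖x‖ ^ 2 := pow_pos hxn 2
  set L : EuclideanSpace ℝ (Fin d) →L[ℝ] EuclideanSpace ℝ (Fin d) →L[ℝ] ℝ :=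
    (2 : ℝ) • (innerSL ℝ : EuclideanSpace ℝ (Fin d) →L[ℝ] EuclideanSpace ℝ (Fin d) →L[ℝ] ℝ)
    with hL
  have hLapp : ∀ y v : EuclideanSpace ℝ (Fin d), L y v = 2 * (inner ℝ y v : ℝ) := by
    intro y v
    simp [hL, ContinuousLinearMap.smul_apply]
    rfl
  have hN : ∀ y : EuclideanSpace ℝ (Fin d), HasFDerivAt (fun z => ‖z‖ ^ 2) (L y) y := by
    intro y
    refine (hasStrictFDerivAt_norm_sq y).hasFDerivAt.congr_fderiv ?_
    ext v
    rw [hLapp]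
    simp [two_smul, real_inner_comm]
    ring
  have hf : ∀ y : EuclideanSpace ℝ (Fin d), y ≠ 0 →
      HasFDerivAt (fun y : EuclideanSpace ℝ (Fin d) => gfun d α t (‖y‖ ^ 2))
        (g1 d α t (‖y‖ ^ 2) • L y) y := by
    intro y hy
    have hys : (0:ℝ) < ‖y‖ ^ 2 := pow_pos (norm_pos_iff.mpr hy) 2
    exact (gfun_hasDerivAt d α t ht hys).comp_hasFDerivAt y (hN y)
  have hc : HasFDerivAt (fun y : EuclideanSpace ℝ (Fin d) => g1 d α t (‖y‖ ^ 2))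
      ((g2 d α t (‖x‖ ^ 2)) • L x) x :=
    by exact (g1_hasDerivAt d α t ht hs).comp_hasFDerivAt x (hN x)
  have hΦ : HasFDerivAt (fun y : EuclideanSpace ℝ (Fin d) => g1 d α t (‖y‖ ^ 2) • L y)
      (g1 d α t (‖x‖ ^ 2) • L + ((g2 d α t (‖x‖ ^ 2)) • L x).smulRight (L x)) x :=
    hc.smul L.hasFDerivAt
  have hev : (fderiv ℝ fun y : EuclideanSpace ℝ (Fin d) => gfun d α t (‖y‖ ^ 2)) =ᶠ[nhds x]
      fun y : EuclideanSpace ℝ (Fin d) => g1 d α t (‖y‖ ^ 2) • L y := by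
    filter_upwards [compl_singleton_mem_nhds hx] with y hy
    exact (hf y hy).fderiv
  have hF : HasFDerivAt (fderiv ℝ fun y : EuclideanSpace ℝ (Fin d) => gfun d α t (‖y‖ ^ 2))
      (g1 d α t (‖x‖ ^ 2) • L + ((g2 d α t (‖x‖ ^ 2)) • L x).smulRight (L x)) x :=
    hΦ.congr_of_eventuallyEq hev
  have hfd := hF.fderiv
  simp only [laplacian]
  have happ : ∀ i : Fin d,
      iteratedFDeriv ℝ 2 (fun y : EuclideanSpace ℝ (Fin d) => gfun d α t (‖y‖ ^ 2)) x
        ![EuclideanSpace.single i 1, EuclideanSpace.single i 1]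
      = g1 d α t (‖x‖ ^ 2) * 2 + (g2 d α t (‖x‖ ^ 2) * (2 * x i)) * (2 * x i) := by
    intro i
    rw [iteratedFDeriv_two_apply, hfd]
    have h1 : (inner ℝ x (EuclideanSpace.single i (1:ℝ)) : ℝ) = x i := by
      rw [EuclideanSpace.inner_single_right]; simp
    have h2 : (inner ℝ (EuclideanSpace.single i (1:ℝ)) (EuclideanSpace.single i (1:ℝ)) : ℝ)
        = 1 := by
      rw [EuclideanSpace.inner_single_right]; simp [EuclideanSpace.single_apply]
    have h1' : (innerSL ℝ x) (EuclideanSpace.single i (1:ℝ)) = x i := h1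
    have h2' : (innerSL ℝ (EuclideanSpace.single i (1:ℝ))) (EuclideanSpace.single i (1:ℝ)) = 1 := h2
    simp only [Matrix.cons_val_zero, Matrix.cons_val_one, Matrix.head_cons,
      ContinuousLinearMap.add_apply, ContinuousLinearMap.coe_smul', Pi.smul_apply,
      ContinuousLinearMap.smul_apply, ContinuousLinearMap.smulRight_apply,
      hL, innerSL_apply_apply, smul_eq_mul, h1, h2, h1', h2']
    ring
  calc (∑ i : Fin d, iteratedFDeriv ℝ 2
          (fun y : EuclideanSpace ℝ (Fin d) => gfun d α t (‖y‖ ^ 2)) x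
          ![EuclideanSpace.single i 1, EuclideanSpace.single i 1])
      = ∑ i : Fin d, (g1 d α t (‖x‖ ^ 2) * 2 + (g2 d α t (‖x‖ ^ 2) * (2 * x i)) * (2 * x i)) :=
        Finset.sum_congr rfl fun i _ => happ i
    _ = 2 * d * g1 d α t (‖x‖ ^ 2) + 4 * ‖x‖ ^ 2 * g2 d α t (‖x‖ ^ 2) := by
        rw [Finset.sum_add_distrib, Finset.sum_const]
        have hnorm : ‖x‖ ^ 2 = ∑ i : Fin d, (x i) ^ 2 := by
          rw [EuclideanSpace.norm_eq, Real.sq_sqrt (by positivity)]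
          congr 1; funext i; rw [Real.norm_eq_abs, sq_abs]
        rw [hnorm]
        simp only [Finset.card_univ, Fintype.card_fin, nsmul_eq_mul]
        have h4 : ∀ i : Fin d, g2 d α t (∑ j : Fin d, x j ^ 2) * (2 * x i) * (2 * x i)
            = 4 * x i ^ 2 * g2 d α t (∑ j : Fin d, x j ^ 2) := fun i => by ring
        rw [Finset.sum_congr rfl fun i _ => h4 i, ← Finset.sum_mul, ← Finset.mul_sum]
        ring

/-- For `d ≥ 3`, `α ∈ ℝ`, the function `ṽ_t(x) = t^α |x|^{-α} G_{2t}(x)` satisfies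
`∂_t ṽ_t(x) = Δṽ_t(x) + (α(d-2-α)/|x|²) ṽ_t(x)` on `(0,∞) × (ℝ^d \ {0})`. -/
theorem tilde_v_pde (d : ℕ) (hd : 3 ≤ d) (α : ℝ) (t : ℝ) (ht : 0 < t)
    (x : EuclideanSpace ℝ (Fin d)) (hx : x ≠ 0) :
    deriv (fun τ : ℝ => τ ^ α * ‖x‖ ^ (-α) * heatKernel d (2 * τ) x) t =
      laplacian d (fun y : EuclideanSpace ℝ (Fin d) =>
          t ^ α * ‖y‖ ^ (-α) * heatKernel d (2 * t) y) x +
        (α * ((d : ℝ) - 2 - α) / ‖x‖ ^ 2) * (t ^ α * ‖x‖ ^ (-α) * heatKernel d (2 * t) x) := by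
  have hπ : (0:ℝ) < π := pi_pos
  have hxn : (0:ℝ) < ‖x‖ := norm_pos_iff.mpr hx
  have hs : (0:ℝ) < ‖x‖ ^ 2 := pow_pos hxn 2
  have h2t : (0:ℝ) < 2 * π * (2 * t) := by positivity
  have hP : ∀ y : EuclideanSpace ℝ (Fin d), ((‖y‖ ^ 2 : ℝ)) ^ (-α / 2) = ‖y‖ ^ (-α) := by
    intro y
    rw [← Real.rpow_natCast ‖y‖ 2, ← Real.rpow_mul (norm_nonneg y)]
    congr 1
    push_cast
    ring
  have hcomp : ∀ y : EuclideanSpace ℝ (Fin d),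
      t ^ α * ‖y‖ ^ (-α) * heatKernel d (2 * t) y = gfun d α t (‖y‖ ^ 2) := by
    intro y
    rw [gfun, heatKernel, hP y]
    rw [show (4:ℝ) * t = 2 * (2 * t) by ring]
    ring
  rw [show (fun y : EuclideanSpace ℝ (Fin d) =>
        t ^ α * ‖y‖ ^ (-α) * heatKernel d (2 * t) y)
      = fun y => gfun d α t (‖y‖ ^ 2) from funext hcomp,
    laplacian_radial d α t ht x hx, hcomp x]
  -- time derivative
  have hA : HasDerivAt (fun τ : ℝ => τ ^ α) (α * t ^ (α - 1)) t :=
    Real.hasDerivAt_rpow_const (Or.inl ht.ne')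
  have hu : HasDerivAt (fun τ : ℝ => 2 * π * (2 * τ)) (4 * π) t := by
    rw [show (fun τ : ℝ => 2 * π * (2 * τ)) = fun τ : ℝ => (4 * π) * τ by funext τ; ring]
    simpa using (hasDerivAt_id t).const_mul (4 * π)
  have hB : HasDerivAt (fun τ : ℝ => (2 * π * (2 * τ)) ^ (-(d : ℝ) / 2))
      ((-(d : ℝ) / 2 * (2 * π * (2 * t)) ^ (-(d : ℝ) / 2 - 1)) * (4 * π)) t :=
    by exact (Real.hasDerivAt_rpow_const (p := -(d : ℝ) / 2) (Or.inl h2t.ne')).comp t hu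
  have hw : HasDerivAt (fun τ : ℝ => -‖x‖ ^ 2 / (2 * (2 * τ))) (‖x‖ ^ 2 / (4 * t ^ 2)) t := by
    rw [show (fun τ : ℝ => -‖x‖ ^ 2 / (2 * (2 * τ))) = fun τ : ℝ => (-‖x‖ ^ 2 / 4) * τ⁻¹ by
      funext τ
      by_cases h : τ = 0
      · subst h; simp
      · field_simp; ring]
    have := (hasDerivAt_inv ht.ne').const_mul (-‖x‖ ^ 2 / 4)
    refine this.congr_deriv ?_
    field_simp
  have hC : HasDerivAt (fun τ : ℝ => Real.exp (-‖x‖ ^ 2 / (2 * (2 * τ))))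
      (Real.exp (-‖x‖ ^ 2 / (2 * (2 * t))) * (‖x‖ ^ 2 / (4 * t ^ 2))) t := hw.exp
  have hT := (hA.mul_const (‖x‖ ^ (-α))).mul (hB.mul hC)
  have hder : deriv (fun τ : ℝ => τ ^ α * ‖x‖ ^ (-α) * heatKernel d (2 * τ) x) t =
      (α * t ^ (α - 1) * ‖x‖ ^ (-α)) *
        ((2 * π * (2 * t)) ^ (-(d : ℝ) / 2) * Real.exp (-‖x‖ ^ 2 / (2 * (2 * t)))) +
      (t ^ α * ‖x‖ ^ (-α)) *
        (((-(d : ℝ) / 2 * (2 * π * (2 * t)) ^ (-(d : ℝ) / 2 - 1)) * (4 * π)) *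
            Real.exp (-‖x‖ ^ 2 / (2 * (2 * t))) +
          (2 * π * (2 * t)) ^ (-(d : ℝ) / 2) *
            (Real.exp (-‖x‖ ^ 2 / (2 * (2 * t))) * (‖x‖ ^ 2 / (4 * t ^ 2)))) :=
    HasDerivAt.deriv (by exact hT)
  rw [hder]
  -- algebraic identity
  have hE : Real.exp (-‖x‖ ^ 2 / (2 * (2 * t))) = Real.exp (-‖x‖ ^ 2 / (4 * t)) := by
    congr 1; ring
  have ht1 : t ^ (α - 1) = t ^ α / t := by
    rw [Real.rpow_sub ht, Real.rpow_one]
  have hB1 : (2 * π * (2 * t)) ^ (-(d : ℝ) / 2 - 1)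
      = (2 * π * (2 * t)) ^ (-(d : ℝ) / 2) / (2 * π * (2 * t)) := by
    rw [Real.rpow_sub h2t, Real.rpow_one]
  simp only [gfun, g1, g2, hP x, hE, ht1, hB1]
  have hAne : t ^ α ≠ 0 := (Real.rpow_pos_of_pos ht α).ne'
  have hKne : ‖x‖ ^ (-α) ≠ 0 := (Real.rpow_pos_of_pos hxn (-α)).ne'
  have hBne : (2 * π * (2 * t)) ^ (-(d : ℝ) / 2) ≠ 0 :=
    (Real.rpow_pos_of_pos h2t _).ne'
  have hEne : Real.exp (-‖x‖ ^ 2 / (4 * t)) ≠ 0 := Real.exp_ne_zero _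
  field_simp
  ring
end
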